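/- Let κ ≤ λ be infinite cardinals, let X be a set of cardinality λ, let π represent an automorphism of P(X)/I_κ, and let ρ : P(X) → P(X) be an inverse selector for π, i.e. π(ρ(A)) ∼_κ A for all A ⊆ X. Let η be an infinite regular cardinal with η ≠ cf(κ), and suppose ⟨A_α : α < η⟩ is a sequence of subsets of X such that: (1) for all α < β < η, |(π(A_α) ∪ ρ(A_α)) \ A_β| < κ; and (2) for all β < η, |⋃{A_α : α < β} \ A_β| < κ. Then ⋃{A_α : α < η} is a fixed point of π, i.e. π(⋃{A_α : α < η}) ∼_κ ⋃{A_α : α < η}. -/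

import Mathlib

open Cardinal Set

universe u

/-- `A ∼_κ B`: the symmetric difference of `A` and `B` has cardinality `< κ`. -/
def Sim {X : Type u} (κ : Cardinal.{u}) (A B : Set X) : Prop :=
  #(↥(symmDiff A B)) < κ

/-- `π : P(X) → P(X)` represents an automorphism of `P(X)/I_κ`. -/
def IsAutoRep {X : Type u} (κ : Cardinal.{u}) (π : Set X → Set X) : Prop :=
  (∀ A B : Set X, Sim κ A B → Sim κ (π A) (π B)) ∧
  (∀ A B : Set X, Sim κ (π (A ∪ B)) (π A ∪ π B)) ∧
  (∀ A : Set X, Sim κ (π Aᶜ) (π A)ᶜ) ∧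
  (∀ B : Set X, ∃ A : Set X, Sim κ (π A) B) ∧
  (∀ A B : Set X, Sim κ (π A) (π B) → Sim κ A B)

/-- `π` is trivial on `Z`: some `f : X → Z` has `π(A) ∼_κ f⁻¹(A)` for all `A ⊆ Z`. -/
def TrivialOn {X : Type u} (κ : Cardinal.{u}) (π : Set X → Set X) (Z : Set X) : Prop :=
  ∃ f : X → X, (∀ x, f x ∈ Z) ∧ ∀ A : Set X, A ⊆ Z → Sim κ (π A) (f ⁻¹' A)

/-- `π` is trivial: some `f : X → X` has `π(A) ∼_κ f⁻¹(A)` for all `A ⊆ X`. -/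
def IsTrivial {X : Type u} (κ : Cardinal.{u}) (π : Set X → Set X) : Prop :=
  ∃ f : X → X, ∀ A : Set X, Sim κ (π A) (f ⁻¹' A)

/-- `π` is cardinality-preserving. -/
def CardPres {X : Type u} (κ : Cardinal.{u}) (π : Set X → Set X) : Prop :=
  ∀ A : Set X, ∃ B : Set X, #(↥B) = #(↥A) ∧ Sim κ (π A) B

section Helpers

variable {X : Type u} {κ : Cardinal.{u}}

lemma sm_subset16 {A B : Set X} (h : A ⊆ B) (hB : #B < κ) : #A < κ :=
  (Cardinal.mk_le_mk_of_subset h).trans_lt hB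

lemma sm_union16 (hκ : ℵ₀ ≤ κ) {s t : Set X} (hs : #s < κ) (ht : #t < κ) :
    #(↥(s ∪ t)) < κ :=
  (Cardinal.mk_union_le s t).trans_lt (Cardinal.add_lt_of_lt hκ hs ht)

lemma sm_cover16 (hκ : ℵ₀ ≤ κ) {A s t : Set X} (h : A ⊆ s ∪ t)
    (hs : #s < κ) (ht : #t < κ) : #A < κ :=
  sm_subset16 h (sm_union16 hκ hs ht)

lemma sim_of (hκ : ℵ₀ ≤ κ) {A B : Set X} (h1 : #(↥(A \ B)) < κ) (h2 : #(↥(B \ A)) < κ) :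
    Sim κ A B := by
  have hsub : (symmDiff A B : Set X) ⊆ (A \ B) ∪ (B \ A) := by
    intro x hx
    rcases Set.mem_symmDiff.1 hx with h | h
    · exact Or.inl ⟨h.1, h.2⟩
    · exact Or.inr ⟨h.1, h.2⟩
  exact sm_cover16 hκ hsub h1 h2

lemma Sim.diff1 {A B : Set X} (h : Sim κ A B) : #(↥(A \ B)) < κ :=
  sm_subset16 (fun x hx => Set.mem_symmDiff.2 (Or.inl ⟨hx.1, hx.2⟩)) h

lemma Sim.diff2 {A B : Set X} (h : Sim κ A B) : #(↥(B \ A)) < κ :=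
  sm_subset16 (fun x hx => Set.mem_symmDiff.2 (Or.inr ⟨hx.1, hx.2⟩)) h

/-- almost-containment transitivity -/
lemma asub_trans (hκ : ℵ₀ ≤ κ) {A B C : Set X}
    (h1 : #(↥(A \ B)) < κ) (h2 : #(↥(B \ C)) < κ) : #(↥(A \ C)) < κ := by
  refine sm_cover16 hκ ?_ h1 h2
  intro x hx
  by_cases hB : x ∈ B
  · exact Or.inr ⟨hB, hx.2⟩
  · exact Or.inl ⟨hx.1, hB⟩

end Helpers

section Pi

variable {X : Type u} {κ : Cardinal.{u}} {π : Set X → Set X}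

lemma pi_mono (hκ : ℵ₀ ≤ κ) (hπ : IsAutoRep κ π) {A B : Set X}
    (h : #(↥(A \ B)) < κ) : #(↥(π A \ π B)) < κ := by
  have hAB : Sim κ (A ∪ B) B := by
    refine sim_of hκ ?_ ?_
    · refine sm_subset16 ?_ h
      intro x hx
      rcases hx.1 with h' | h'
      · exact ⟨h', hx.2⟩
      · exact absurd h' hx.2
    · refine sm_subset16 ?_ h
      intro x hx
      exact absurd (Or.inr hx.1) hx.2
  have hu : Sim κ (π (A ∪ B)) (π B) := hπ.1 _ _ hAB
  have hu2 : Sim κ (π (A ∪ B)) (π A ∪ π B) := hπ.2.1 A B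
  refine sm_cover16 hκ ?_ hu2.diff2 hu.diff1
  intro x hx
  by_cases hP : x ∈ π (A ∪ B)
  · exact Or.inr ⟨hP, hx.2⟩
  · exact Or.inl ⟨Or.inl hx.1, hP⟩

lemma pi_rev (hκ : ℵ₀ ≤ κ) (hπ : IsAutoRep κ π) {A B : Set X}
    (h : #(↥(π A \ π B)) < κ) : #(↥(A \ B)) < κ := by
  have hu2 : Sim κ (π (A ∪ B)) (π A ∪ π B) := hπ.2.1 A B
  have hsim : Sim κ (π (A ∪ B)) (π B) := by
    refine sim_of hκ ?_ ?_
    · refine sm_cover16 hκ ?_ hu2.diff1 h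
      intro x hx
      by_cases hP : x ∈ π A ∪ π B
      · rcases hP with h' | h'
        · exact Or.inr ⟨h', hx.2⟩
        · exact absurd h' hx.2
      · exact Or.inl ⟨hx.1, hP⟩
    · refine sm_subset16 ?_ hu2.diff2
      intro x hx
      exact ⟨Or.inr hx.1, hx.2⟩
  have := hπ.2.2.2.2 _ _ hsim
  refine sm_subset16 ?_ this.diff1
  intro x hx
  exact ⟨Or.inl hx.1, hx.2⟩

lemma pi_empty_small (hκ : ℵ₀ ≤ κ) (hπ : IsAutoRep κ π) : #(↥(π (∅ : Set X))) < κ := by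
  have hc : Sim κ (π ((∅ : Set X)ᶜ)) (π (∅ : Set X))ᶜ := hπ.2.2.1 ∅
  rw [Set.compl_empty] at hc
  have hu : Sim κ (π ((∅ : Set X) ∪ univ)) (π (∅ : Set X) ∪ π univ) := hπ.2.1 ∅ univ
  rw [Set.empty_union] at hu
  refine sm_cover16 hκ ?_ hu.diff2 hc.diff1
  intro x hx
  by_cases hP : x ∈ π (univ : Set X)
  · exact Or.inr ⟨hP, fun hcc => hcc hx⟩
  · exact Or.inl ⟨Or.inl hx, hP⟩

lemma pi_small (hκ : ℵ₀ ≤ κ) (hπ : IsAutoRep κ π) {C : Set X}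
    (h : #(↥(π C)) < κ) : #(↥C) < κ := by
  have hsim : Sim κ (π C) (π (∅ : Set X)) := by
    refine sim_of hκ ?_ ?_
    · exact sm_subset16 (fun x hx => hx.1) h
    · exact sm_subset16 (fun x hx => hx.1) (pi_empty_small hκ hπ)
  have := hπ.2.2.2.2 _ _ hsim
  refine sm_subset16 ?_ this.diff1
  intro x hx
  exact ⟨hx, fun h' => h'⟩

end Pi

lemma chain_small16 {X : Type u} {κ η : Cardinal.{u}} (hκ : ℵ₀ ≤ κ)
    (hηreg : η.IsRegular) (hηcf : η ≠ κ.ord.cof) (S : Ordinal.{u} → Set X)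
    (H : ∀ β < η.ord, #(↥(⋃ α, ⋃ (_ : α ≤ β), S α)) < κ) :
    #(↥(⋃ α, ⋃ (_ : α < η.ord), S α)) < κ := by
  set o := η.ord with ho
  let e := Ordinal.ToType.mk (o := o)
  let b : o.ToType → Ordinal.{u} := fun i => (e.symm i).1
  have hb_lt : ∀ i, b i < o := fun i => (e.symm i).2
  let T : o.ToType → Set X := fun i => ⋃ α, ⋃ (_ : α ≤ b i), S α
  have hT : ∀ i, #(↥(T i)) < κ := fun i => H _ (hb_lt i)
  have hTmono : ∀ i j : o.ToType, b i ≤ b j → T i ⊆ T j := by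
    intro i j hij x hx
    simp only [T, Set.mem_iUnion] at hx ⊢
    obtain ⟨α, hα, hx⟩ := hx
    exact ⟨α, hα.trans hij, hx⟩
  have hUnion : (⋃ α, ⋃ (_ : α < o), S α) = ⋃ i, T i := by
    ext x
    simp only [T, Set.mem_iUnion]
    constructor
    · rintro ⟨α, hα, hx⟩
      refine ⟨e ⟨α, hα⟩, α, ?_, hx⟩
      show α ≤ (e.symm (e ⟨α, hα⟩)).1
      rw [OrderIso.symm_apply_apply]
    · rintro ⟨i, α, hα, hx⟩
      exact ⟨α, lt_of_le_of_lt hα (hb_lt i), hx⟩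
  rw [hUnion]
  have hcard : #o.ToType = η := by rw [Cardinal.mk_toType, ho, Cardinal.card_ord]
  have hcof : o.cof = η := hηreg.cof_eq
  have hηκ : η ≠ κ := by
    intro h
    exact hηcf (by rw [← h, ← ho, hcof])
  set s := ⨆ i, #(↥(T i)) with hs_def
  have hs_le : s ≤ κ := ciSup_le' fun i => (hT i).le
  have hTs : ∀ i, #(↥(T i)) ≤ s := fun i => le_ciSup (Cardinal.bddAbove_range _) i
  rcases hs_le.lt_or_eq with hs | hs
  · -- s < κ
    rcases lt_trichotomy η κ with hlt | heq | hgt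
    · calc #(↥(⋃ i, T i)) ≤ #o.ToType * s := Cardinal.mk_iUnion_le T
        _ < κ := by rw [hcard]; exact Cardinal.mul_lt_of_lt hκ hlt hs
    · exact absurd heq hηκ
    · by_contra hcon
      push_neg at hcon
      have hss : Order.succ s ≤ #(↥(⋃ i, T i)) :=
        le_trans (le_trans (Order.succ_le_of_lt hs) hcon) le_rfl
      obtain ⟨p, hp⟩ := Cardinal.le_mk_iff_exists_set.1 hss
      have hmem : ∀ x : p, ∃ i, (x : X) ∈ T i := fun x => Set.mem_iUnion.1 x.1.2
      choose g hg using hmem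
      have hplt : #p < o.cof := by
        rw [hcof, hp]
        exact lt_of_le_of_lt (Order.succ_le_of_lt hs) hgt
      have hsup : (⨆ x : p, b (g x)) < o := Ordinal.iSup_lt_ord hplt fun x => hb_lt _
      let i' : o.ToType := e ⟨_, hsup⟩
      have hbi' : b i' = ⨆ x : p, b (g x) := by
        show (e.symm (e _)).1 = _
        rw [OrderIso.symm_apply_apply]
      have hsub : ∀ x : p, (x : X) ∈ T i' := by
        intro x
        refine hTmono (g x) i' ?_ (hg x)
        rw [hbi']
        exact le_ciSup (Ordinal.bddAbove_range _) x
      have hinj : #p ≤ #(↥(T i')) := by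
        refine Cardinal.mk_le_of_injective (f := fun x : p => (⟨(x : X), hsub x⟩ : T i')) ?_
        intro x y hxy
        apply Subtype.ext
        apply Subtype.ext
        exact Subtype.mk_eq_mk.1 hxy
      rw [hp] at hinj
      exact (Order.lt_succ s).not_ge (hinj.trans (hTs i'))
  · -- s = κ
    exfalso
    rcases lt_trichotomy η κ.ord.cof with hlt | heq | hgt
    · have : s < κ := Ordinal.iSup_lt (by rw [hcard]; exact hlt) hT
      exact this.ne hs
    · exact hηcf heq
    · obtain ⟨ι', f, hlsub, hι'⟩ := Ordinal.exists_lsub_cof κ.ord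
      have hfj : ∀ j, (f j).card < κ := fun j =>
        Cardinal.lt_ord.1 (by rw [← hlsub]; exact Ordinal.lt_lsub f j)
      have : Nonempty o.ToType := Ordinal.toType_nonempty_iff_ne_zero.2 hηreg.ord_pos.ne'
      have hchoose : ∀ j, ∃ i, (f j).card < #(↥(T i)) := by
        intro j
        have : (f j).card < s := by rw [hs]; exact hfj j
        exact exists_lt_of_lt_ciSup this
      choose g hg using hchoose
      have hι'lt : #ι' < o.cof := by rw [hcof, hι']; exact hgt
      have hsup : (⨆ j, b (g j)) < o := Ordinal.iSup_lt_ord hι'lt fun j => hb_lt _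
      let i' : o.ToType := e ⟨_, hsup⟩
      have hbi' : b i' = ⨆ j, b (g j) := by
        show (e.symm (e _)).1 = _
        rw [OrderIso.symm_apply_apply]
      have hall : ∀ j, (f j).card < #(↥(T i')) := by
        intro j
        refine (hg j).trans_le (Cardinal.mk_le_mk_of_subset (hTmono (g j) i' ?_))
        rw [hbi']
        exact le_ciSup (Ordinal.bddAbove_range _) j
      have hord : κ.ord ≤ (#(↥(T i'))).ord := by
        rw [← hlsub]
        exact Ordinal.lsub_le fun j => Cardinal.lt_ord.2 (hall j)
      rw [Cardinal.ord_le_ord] at hord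
      exact (hT i').not_ge hord


/-- An increasing `η`-chain (for `η` regular, `η ≠ cf(κ)`) which almost absorbs images and
preimages under `π` has union a fixed point of `π`. -/
theorem stmt16 {X : Type u} (κ lam : Cardinal.{u}) (hκ : ℵ₀ ≤ κ)
    (hkl : κ ≤ lam) (hX : #X = lam)
    (π : Set X → Set X) (hπ : IsAutoRep κ π)
    (ρ : Set X → Set X) (hρ : ∀ A : Set X, Sim κ (π (ρ A)) A)
    (η : Cardinal.{u}) (hη : ℵ₀ ≤ η) (hηreg : η.IsRegular)
    (hηcf : η ≠ (κ.ord).cof)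
    (A : Ordinal.{u} → Set X)
    (h1 : ∀ α β : Ordinal.{u}, α < β → β < η.ord →
      #(↥((π (A α) ∪ ρ (A α)) \ A β)) < κ)
    (h2 : ∀ β : Ordinal.{u}, β < η.ord →
      #(↥((⋃ (α : Ordinal.{u}) (_ : α < β), A α) \ A β)) < κ) :
    Sim κ (π (⋃ (α : Ordinal.{u}) (_ : α < η.ord), A α))
      (⋃ (α : Ordinal.{u}) (_ : α < η.ord), A α) := by
  set o := η.ord with ho
  set U : Set X := ⋃ (α : Ordinal.{u}) (_ : α < o), A α with hUdef
  have hAU : ∀ {α : Ordinal.{u}}, α < o → A α ⊆ U := fun {α} hα =>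
    Set.subset_iUnion₂ (s := fun α _ => A α) α hα
  have hzero : (0 : Cardinal.{u}) < κ := lt_of_lt_of_le Cardinal.aleph0_pos hκ
  have hsubU : ∀ {α : Ordinal.{u}}, α < o → #(↥(A α \ U)) < κ := by
    intro α hα
    rw [Set.diff_eq_empty.2 (hAU hα), Cardinal.mk_emptyCollection]
    exact hzero
  have hlimit : Order.IsSuccLimit o := Cardinal.isSuccLimit_ord hη
  have hsucc : ∀ {β : Ordinal.{u}}, β < o → Order.succ β < o := fun hβ => hlimit.succ_lt hβ
  -- Step A : A β almost contained in π U
  have stepA : ∀ {β : Ordinal.{u}}, β < o → #(↥(A β \ π U)) < κ := by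
    intro β hβ
    have ha : #(↥(ρ (A β) \ A (Order.succ β))) < κ := by
      refine sm_subset16 ?_ (h1 β (Order.succ β) (Order.lt_succ β) (hsucc hβ))
      intro x hx
      exact ⟨Or.inr hx.1, hx.2⟩
    have hb : #(↥(ρ (A β) \ U)) < κ := asub_trans hκ ha (hsubU (hsucc hβ))
    have hc : #(↥(π (ρ (A β)) \ π U)) < κ := pi_mono hκ hπ hb
    exact asub_trans hκ (hρ (A β)).diff2 hc
  -- Step B : π (A β) almost contained in U
  have stepB : ∀ {β : Ordinal.{u}}, β < o → #(↥(π (A β) \ U)) < κ := by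
    intro β hβ
    have ha : #(↥(π (A β) \ A (Order.succ β))) < κ := by
      refine sm_subset16 ?_ (h1 β (Order.succ β) (Order.lt_succ β) (hsucc hβ))
      intro x hx
      exact ⟨Or.inl hx.1, hx.2⟩
    exact asub_trans hκ ha (hsubU (hsucc hβ))
  -- Step C : U \ π U is small
  have stepC : #(↥(U \ π U)) < κ := by
    have hchain : #(↥(⋃ (α : Ordinal.{u}) (_ : α < o), (A α \ π U))) < κ := by
      refine chain_small16 hκ hηreg hηcf _ ?_
      intro β hβ
      refine sm_cover16 hκ ?_ (h2 β hβ) (stepA hβ)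
      intro x hx
      simp only [Set.mem_iUnion] at hx
      obtain ⟨α, hαβ, hxα, hxπ⟩ := hx
      by_cases hxβ : x ∈ A β
      · exact Or.inr ⟨hxβ, hxπ⟩
      · rcases hαβ.lt_or_eq with h' | h'
        · exact Or.inl ⟨Set.mem_iUnion₂.2 ⟨α, h', hxα⟩, hxβ⟩
        · exact absurd (h' ▸ hxα) hxβ
    refine sm_subset16 ?_ hchain
    intro x hx
    obtain ⟨hxU, hxπ⟩ := hx
    rw [hUdef] at hxU
    obtain ⟨α, hα, hxα⟩ := Set.mem_iUnion₂.1 hxU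
    exact Set.mem_iUnion₂.2 ⟨α, hα, hxα, hxπ⟩
  -- Step D : π U \ U is small
  have stepD : #(↥(π U \ U)) < κ := by
    set V : Set X := ρ Uᶜ with hVdef
    have hVsim : Sim κ (π V) Uᶜ := hρ Uᶜ
    have hVA : ∀ {α : Ordinal.{u}}, α < o → #(↥(V ∩ A α)) < κ := by
      intro α hα
      have hx0 : #(↥((V ∩ A α) \ V)) < κ := by
        rw [Set.diff_eq_empty.2 Set.inter_subset_left, Cardinal.mk_emptyCollection]
        exact hzero
      have hx1 : #(↥(π (V ∩ A α) \ π V)) < κ := pi_mono hκ hπ hx0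
      have hx2 : #(↥(π (V ∩ A α) \ Uᶜ)) < κ := asub_trans hκ hx1 hVsim.diff1
      have hx3 : #(↥((V ∩ A α) \ A α)) < κ := by
        rw [Set.diff_eq_empty.2 Set.inter_subset_right, Cardinal.mk_emptyCollection]
        exact hzero
      have hx4 : #(↥(π (V ∩ A α) \ π (A α))) < κ := pi_mono hκ hπ hx3
      have hx5 : #(↥(π (V ∩ A α) \ U)) < κ := asub_trans hκ hx4 (stepB hα)
      have hx6 : #(↥(π (V ∩ A α))) < κ := by
        refine sm_cover16 hκ ?_ hx2 hx5
        intro x hx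
        by_cases hxU : x ∈ U
        · exact Or.inl ⟨hx, fun h => h hxU⟩
        · exact Or.inr ⟨hx, hxU⟩
      exact pi_small hκ hπ hx6
    have hchain : #(↥(⋃ (α : Ordinal.{u}) (_ : α < o), (V ∩ A α))) < κ := by
      refine chain_small16 hκ hηreg hηcf _ ?_
      intro β hβ
      refine sm_cover16 hκ ?_ (h2 β hβ) (hVA hβ)
      intro x hx
      simp only [Set.mem_iUnion] at hx
      obtain ⟨α, hαβ, hxV, hxα⟩ := hx
      by_cases hxβ : x ∈ A β
      · exact Or.inr ⟨hxV, hxβ⟩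
      · rcases hαβ.lt_or_eq with h' | h'
        · exact Or.inl ⟨Set.mem_iUnion₂.2 ⟨α, h', hxα⟩, hxβ⟩
        · exact absurd (h' ▸ hxα) hxβ
    have hVU : #(↥(V \ Uᶜ)) < κ := by
      refine sm_subset16 ?_ hchain
      intro x hx
      obtain ⟨hxV, hxc⟩ := hx
      have hxU : x ∈ U := by
        by_contra h
        exact hxc h
      rw [hUdef] at hxU
      obtain ⟨α, hα, hxα⟩ := Set.mem_iUnion₂.1 hxU
      exact Set.mem_iUnion₂.2 ⟨α, hα, hxV, hxα⟩
    have hy1 : #(↥(π V \ π Uᶜ)) < κ := pi_mono hκ hπ hVU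
    have hy2 : #(↥(Uᶜ \ π Uᶜ)) < κ := asub_trans hκ hVsim.diff2 hy1
    have hy3 : Sim κ (π Uᶜ) (π U)ᶜ := hπ.2.2.1 U
    have hy4 : #(↥(Uᶜ \ (π U)ᶜ)) < κ := asub_trans hκ hy2 hy3.diff1
    refine sm_subset16 ?_ hy4
    intro x hx
    exact ⟨hx.2, fun h => h hx.1⟩
  exact sim_of hκ stepD stepC
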